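/- Let G be a finite simple graph with vertex set V whose automorphism group has orbits O_1, …, O_k on V, and let R ⊆ V be a reduct of the full attribute set V (i.e., ≡_R coincides with ≡_V and no proper subset R' ⊊ R satisfies ≡_{R'} = ≡_V). Then there is exactly one index j ∈ {1,…,k} with R ∩ O_j = ∅, and |R ∩ O_i| = 1 for every i ≠ j. -/
import Mathlib


/-- The orbit of a vertex `x` under the automorphism group of the graph `G`:
`O(x) = {φ(x) : φ an automorphism of G}`. -/
def orb {V : Type*} (G : SimpleGraph V) (x : V) : Set V :=
  {y | ∃ φ : G ≃g G, φ x = y}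

/-- The indiscernibility relation `x ≡_A y` iff `O(x) ∩ A = O(y) ∩ A`. -/
def Indis {V : Type*} (G : SimpleGraph V) (A : Set V) (x y : V) : Prop :=
  orb G x ∩ A = orb G y ∩ A

/-- The `≡_A`-equivalence class `O_A(x)` of a vertex `x`. -/
def eqCls {V : Type*} (G : SimpleGraph V) (A : Set V) (x : V) : Set V :=
  {y | Indis G A x y}

/-- `O(A) = ⋃_{a ∈ A} O(a)`. -/
def orbSet {V : Type*} (G : SimpleGraph V) (A : Set V) : Set V :=
  ⋃ a ∈ A, orb G a

/-- Lower approximation `L_A(Q) = {x | O_A(x) ⊆ Q}`. -/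
def lowerApprox {V : Type*} (G : SimpleGraph V) (A Q : Set V) : Set V :=
  {x | eqCls G A x ⊆ Q}

/-- Upper approximation `U_A(Q) = {x | O_A(x) ∩ Q ≠ ∅}`. -/
def upperApprox {V : Type*} (G : SimpleGraph V) (A Q : Set V) : Set V :=
  {x | (eqCls G A x ∩ Q).Nonempty}

/-- `R` is a reduct of the attribute set `A`: `R ⊆ A`, the relation `≡_R` coincides with
`≡_A`, and no proper subset of `R` yields the same indiscernibility relation as `A`. -/
def IsReduct {V : Type*} (G : SimpleGraph V) (A R : Set V) : Prop :=
  R ⊆ A ∧ (∀ x y : V, Indis G R x y ↔ Indis G A x y) ∧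
    ∀ R' : Set V, R' ⊂ R → ¬ (∀ x y : V, Indis G R' x y ↔ Indis G A x y)

lemma mem_orb_self {V : Type*} (G : SimpleGraph V) (x : V) : x ∈ orb G x :=
  ⟨RelIso.refl _, rfl⟩

lemma orb_eq_of_mem {V : Type*} {G : SimpleGraph V} {x y : V} (h : y ∈ orb G x) :
    orb G y = orb G x := by
  obtain ⟨φ, rfl⟩ := h
  ext z
  constructor
  · rintro ⟨ψ, rfl⟩
    exact ⟨φ.trans ψ, rfl⟩
  · rintro ⟨ψ, rfl⟩
    exact ⟨φ.symm.trans ψ, by simp⟩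

lemma orb_eq_of_mem_mem {V : Type*} {G : SimpleGraph V} {x y b : V}
    (hx : b ∈ orb G x) (hy : b ∈ orb G y) : orb G x = orb G y :=
  (orb_eq_of_mem hx).symm.trans (orb_eq_of_mem hy)

/-- Key auxiliary step: if removing `a` from `R` merges the classes of `x` and `y`,
with `a ∈ orb x`, then `orb y` is disjoint from `R` and `orb a ∩ R = {a}`. -/
lemma aux_key {V : Type*} {G : SimpleGraph V} {R : Set V}
    {a x y : V} (ha : a ∈ R)
    (hR' : orb G x ∩ (R \ {a}) = orb G y ∩ (R \ {a}))
    (hne : orb G x ≠ orb G y) (hax : a ∈ orb G x) :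
    orb G y ∩ R = ∅ ∧ orb G a ∩ R = {a} ∧ orb G y ≠ orb G a := by
  have hoax : orb G a = orb G x := orb_eq_of_mem hax
  have hay : a ∉ orb G y := fun h => hne (hoax.symm.trans (orb_eq_of_mem h))
  have hyR : orb G y ∩ R = ∅ := by
    rw [Set.eq_empty_iff_forall_notMem]
    rintro b ⟨hby, hbR⟩
    by_cases hb : b = a
    · exact hay (hb ▸ hby)
    · have : b ∈ orb G x ∩ (R \ {a}) := hR' ▸ ⟨hby, hbR, hb⟩
      exact hne (orb_eq_of_mem_mem this.1 hby)
  have hxa : orb G x ∩ R = {a} := by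
    ext b
    constructor
    · rintro ⟨hbx, hbR⟩
      by_contra hb
      have : b ∈ orb G y ∩ (R \ {a}) := hR' ▸ ⟨hbx, hbR, hb⟩
      have : b ∈ orb G y ∩ R := ⟨this.1, this.2.1⟩
      rw [hyR] at this
      exact this
    · rintro rfl
      exact ⟨hax, ha⟩
  exact ⟨hyR, hoax ▸ hxa, fun h => hne ((hoax ▸ h).symm)⟩

/-- if the orbits of `G` are `O_1, …, O_k` and `R` is a reduct of the full
attribute set `V`, then there is exactly one index `j` with `R ∩ O_j = ∅`, and
`|R ∩ O_i| = 1` for every `i ≠ j`. -/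
theorem stmt_6 {V : Type*} [Fintype V] [Nonempty V] (G : SimpleGraph V) {k : ℕ}
    (Os : Fin k → Set V)
    (hOs : ∀ i, ∃ x : V, Os i = orb G x)
    (hcover : ∀ x : V, ∃ i, x ∈ Os i)
    (hinj : Function.Injective Os)
    (R : Set V) (hR : IsReduct G Set.univ R) :
    ∃ j : Fin k, (∀ i, R ∩ Os i = ∅ ↔ i = j) ∧
      ∀ i, i ≠ j → (R ∩ Os i).ncard = 1 := by
  obtain ⟨hsub, hiffR, hmin⟩ := hR
  have hiff' : ∀ x y : V, orb G x ∩ R = orb G y ∩ R ↔ orb G x = orb G y := by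
    intro x y
    have := hiffR x y
    simpa [Indis] using this
  -- at most one orbit disjoint from R
  have hatmost : ∀ i i' : Fin k, R ∩ Os i = ∅ → R ∩ Os i' = ∅ → i = i' := by
    intro i i' h h'
    obtain ⟨x, hx⟩ := hOs i
    obtain ⟨y, hy⟩ := hOs i'
    apply hinj
    rw [hx, hy]
    apply (hiff' x y).mp
    rw [hx, Set.inter_comm] at h
    rw [hy, Set.inter_comm] at h'
    rw [h, h']
  by_cases hRe : R = ∅
  · -- degenerate case : all orbits equal, so k has exactly one index
    subst hRe
    have hall : ∀ x y : V, orb G x = orb G y := by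
      intro x y
      exact (hiff' x y).mp (by simp)
    obtain ⟨j, hj⟩ := hcover (Classical.arbitrary V)
    have heq : ∀ i : Fin k, i = j := by
      intro i
      obtain ⟨xi, hxi⟩ := hOs i
      obtain ⟨xj, hxj⟩ := hOs j
      apply hinj
      rw [hxi, hxj]
      exact hall xi xj
    exact ⟨j, fun i => ⟨fun _ => heq i, fun _ => by simp⟩,
      fun i hij => absurd (heq i) hij⟩
  · -- main case
    have hkey : ∀ a ∈ R, (∃ y, orb G y ∩ R = ∅ ∧ orb G y ≠ orb G a) ∧
        orb G a ∩ R = {a} := by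
      intro a ha
      have hss : R \ {a} ⊂ R := Set.sdiff_singleton_ssubset.mpr ha
      have hfail := hmin (R \ {a}) hss
      push_neg at hfail
      obtain ⟨x, y, hxy⟩ := hfail
      have h2 : Indis G Set.univ x y → Indis G (R \ {a}) x y := by
        intro h
        simp only [Indis, Set.inter_univ] at h
        simp [Indis, h]
      have hP : Indis G (R \ {a}) x y ∧ ¬ Indis G Set.univ x y := by tauto
      have hR' : orb G x ∩ (R \ {a}) = orb G y ∩ (R \ {a}) := hP.1
      have hne : orb G x ≠ orb G y := by
        intro h
        exact hP.2 (by simp [Indis, h])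
      by_cases hax : a ∈ orb G x
      · obtain ⟨h1, h2, h3⟩ := aux_key ha hR' hne hax
        exact ⟨⟨y, h1, h3⟩, h2⟩
      · by_cases hay : a ∈ orb G y
        · obtain ⟨h1, h2, h3⟩ := aux_key ha hR'.symm (Ne.symm hne) hay
          exact ⟨⟨x, h1, h3⟩, h2⟩
        · exfalso
          apply hne
          apply (hiff' x y).mp
          have e1 : orb G x ∩ R = orb G x ∩ (R \ {a}) := by
            ext b
            exact ⟨fun ⟨h1, h2⟩ => ⟨h1, h2, fun hb => hax (hb ▸ h1)⟩,
              fun ⟨h1, h2, _⟩ => ⟨h1, h2⟩⟩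
          have e2 : orb G y ∩ R = orb G y ∩ (R \ {a}) := by
            ext b
            exact ⟨fun ⟨h1, h2⟩ => ⟨h1, h2, fun hb => hay (hb ▸ h1)⟩,
              fun ⟨h1, h2, _⟩ => ⟨h1, h2⟩⟩
          rw [e1, e2, hR']
    obtain ⟨a0, ha0⟩ := Set.nonempty_iff_ne_empty.mpr hRe
    obtain ⟨⟨y0, hy0, _⟩, _⟩ := hkey a0 ha0
    obtain ⟨j, hjmem⟩ := hcover y0
    have hOj : Os j = orb G y0 := by
      obtain ⟨z, hz⟩ := hOs j
      rw [hz]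
      exact (orb_eq_of_mem (hz ▸ hjmem)).symm
    have hj : R ∩ Os j = ∅ := by rw [hOj, Set.inter_comm]; exact hy0
    refine ⟨j, fun i => ⟨fun h => hatmost i j h hj, fun h => h ▸ hj⟩, ?_⟩
    intro i hij
    obtain ⟨xi, hxi⟩ := hOs i
    have hne : R ∩ Os i ≠ ∅ := fun h => hij (hatmost i j h hj)
    obtain ⟨a, haR, hai⟩ := Set.nonempty_iff_ne_empty.mpr hne
    have hoa : Os i = orb G a := by
      rw [hxi]
      exact (orb_eq_of_mem (hxi ▸ hai)).symm
    rw [hoa, Set.inter_comm, (hkey a haR).2]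
    exact Set.ncard_singleton a
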